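/- For the t-star S = {F ∈ C([n],k) : [t] ⊆ F} (where t ≤ k ≤ n), the codegree squared sum equals co₂(S) = C(n-t,k-t)·(t + (n-k+1)(k-t)). -/

import Mathlib

open Finset

lemma count_supersets {α : Type*} [DecidableEq α] (s B : Finset α) (hB : B ⊆ s) {m : ℕ}
    (hm : B.card ≤ m) :
    ((s.powersetCard m).filter fun A => B ⊆ A).card = (s.card - B.card).choose (m - B.card) := by
  rw [← Finset.card_sdiff_of_subset hB, ← Finset.card_powersetCard]
  apply Finset.card_nbij' (fun A => A \ B) (fun C => C ∪ B)
  · intro A hA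
    simp only [Finset.mem_coe, mem_filter, Finset.mem_powersetCard] at hA ⊢
    obtain ⟨⟨hAs, hAc⟩, hBA⟩ := hA
    exact ⟨sdiff_subset_sdiff hAs (le_refl B), by rw [card_sdiff_of_subset hBA, hAc]⟩
  · intro C hC
    simp only [Finset.mem_coe, mem_filter, Finset.mem_powersetCard] at hC ⊢
    obtain ⟨hCs, hCc⟩ := hC
    have hdisj : Disjoint C B := disjoint_of_subset_left hCs sdiff_disjoint
    refine ⟨⟨union_subset (hCs.trans sdiff_subset) hB, ?_⟩, subset_union_right⟩
    rw [card_union_of_disjoint hdisj, hCc]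
    omega
  · intro A hA
    simp only [Finset.mem_coe, mem_filter, Finset.mem_powersetCard] at hA
    exact sdiff_union_of_subset hA.2
  · intro C hC
    simp only [Finset.mem_coe, Finset.mem_powersetCard] at hC
    exact union_sdiff_cancel_right (disjoint_of_subset_left hC.1 sdiff_disjoint)

theorem co2_t_star (n k t : ℕ) (hk : 1 ≤ k) (ht : t ≤ k) (hkn : k ≤ n) :
    ∑ E ∈ Finset.univ.powersetCard (k - 1),
        ((((Finset.univ.powersetCard k).filter fun A : Finset (Fin n) =>
            (Finset.univ.filter fun v : Fin n => (v : ℕ) < t) ⊆ A).filter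
              fun A => E ⊆ A).card) ^ 2 =
      (n - t).choose (k - t) * (t + (n - k + 1) * (k - t)) := by
  set T : Finset (Fin n) := Finset.univ.filter fun v : Fin n => (v : ℕ) < t with hT
  have htn : t ≤ n := ht.trans hkn
  have hTmap : T.map Fin.valEmbedding = Finset.range t := by
    ext x
    simp only [mem_map, mem_filter, mem_univ, true_and, Fin.valEmbedding_apply, mem_range, hT]
    constructor
    · rintro ⟨a, ha, rfl⟩; exact ha
    · intro hx; exact ⟨⟨x, by omega⟩, hx, rfl⟩
  have hTcard : T.card = t := by
    rw [← Finset.card_range t, ← hTmap, Finset.card_map]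
  -- rewrite each inner filter as supersets of T ∪ E
  have hfilter : ∀ E : Finset (Fin n),
      (((Finset.univ.powersetCard k).filter fun A : Finset (Fin n) => T ⊆ A).filter
        fun A => E ⊆ A) =
      (Finset.univ.powersetCard k).filter fun A => T ∪ E ⊆ A := by
    intro E
    rw [filter_filter]
    apply filter_congr
    intro A _
    simp [union_subset_iff]
  -- pointwise value of d(E)^2
  have key : ∀ E ∈ (Finset.univ : Finset (Fin n)).powersetCard (k - 1),
      ((((Finset.univ.powersetCard k).filter fun A : Finset (Fin n) => T ⊆ A).filter
          fun A => E ⊆ A).card) ^ 2 =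
      (if T ⊆ E then (n - k + 1) ^ 2 else 0) + (if (T \ E).card = 1 then 1 else 0) := by
    intro E hE
    rw [Finset.mem_powersetCard_univ] at hE
    rw [hfilter]
    by_cases hTE : T ⊆ E
    · have hsd : (T \ E).card = 0 := by
        rw [Finset.card_eq_zero, sdiff_eq_empty_iff_subset]; exact hTE
      rw [if_pos hTE, if_neg (by omega), union_eq_right.mpr hTE]
      rw [count_supersets _ _ (subset_univ E) (by omega), hE, Finset.card_univ, Fintype.card_fin]
      have h1 : k - (k - 1) = 1 := by omega
      rw [h1, Nat.choose_one_right]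
      have : n - (k - 1) = n - k + 1 := by omega
      rw [this, add_zero]
    · rw [if_neg hTE]
      have hsd0 : (T \ E).card ≠ 0 := by
        rw [Ne, Finset.card_eq_zero, sdiff_eq_empty_iff_subset]; exact hTE
      have hcu : (T ∪ E).card = (T \ E).card + E.card := by
        rw [Finset.card_sdiff_add_card, union_comm]
      by_cases h1 : (T \ E).card = 1
      · rw [if_pos h1]
        have hcard : (T ∪ E).card = k := by omega
        rw [count_supersets _ _ (subset_univ _) (le_of_eq hcard), hcard,
          Finset.card_univ, Fintype.card_fin, Nat.sub_self, Nat.choose_zero_right]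
        norm_num
      · rw [if_neg h1]
        have : ((Finset.univ.powersetCard k).filter fun A : Finset (Fin n) => T ∪ E ⊆ A) = ∅ := by
          rw [Finset.filter_eq_empty_iff]
          intro A hA hsub
          rw [Finset.mem_powersetCard_univ] at hA
          have := Finset.card_le_card hsub
          omega
        rw [this, Finset.card_empty]
        norm_num
  rw [Finset.sum_congr rfl key, Finset.sum_add_distrib, ← Finset.sum_filter, ← Finset.sum_filter]
  -- second sum : count E with |T \ E| = 1
  have hbi : ((Finset.univ : Finset (Fin n)).powersetCard (k - 1)).filter
        (fun E => (T \ E).card = 1) =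
      T.biUnion fun x => ((Finset.univ : Finset (Fin n)).powersetCard (k - 1)).filter
        (fun E => T \ E = {x}) := by
    ext E
    simp only [mem_filter, mem_biUnion]
    constructor
    · rintro ⟨hE, hc⟩
      obtain ⟨x, hx⟩ := Finset.card_eq_one.mp hc
      have hxT : x ∈ T \ E := hx ▸ Finset.mem_singleton_self x
      exact ⟨x, (Finset.mem_sdiff.mp hxT).1, hE, hx⟩
    · rintro ⟨x, _, hE, hx⟩
      exact ⟨hE, by rw [hx, Finset.card_singleton]⟩
  have hinner : ∀ x ∈ T,
      (((Finset.univ : Finset (Fin n)).powersetCard (k - 1)).filter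
        (fun E => T \ E = {x})).card = (n - t).choose (k - t) := by
    intro x hx
    have ht1 : 1 ≤ t := by
      simp only [hT, mem_filter] at hx; omega
    have heq : ((Finset.univ : Finset (Fin n)).powersetCard (k - 1)).filter
          (fun E => T \ E = {x}) =
        ((Finset.univ.erase x).powersetCard (k - 1)).filter (fun E => T.erase x ⊆ E) := by
      ext E
      simp only [mem_filter, Finset.mem_powersetCard, Finset.mem_powersetCard_univ,
        Finset.subset_erase, Finset.subset_univ, true_and]
      constructor
      · rintro ⟨hc, hTE⟩
        have hxE : x ∉ E := by
          have : x ∈ T \ E := hTE ▸ Finset.mem_singleton_self x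
          exact (Finset.mem_sdiff.mp this).2
        refine ⟨⟨hxE, hc⟩, ?_⟩
        intro y hy
        rw [Finset.mem_erase] at hy
        by_contra hyE
        have : y ∈ T \ E := Finset.mem_sdiff.mpr ⟨hy.2, hyE⟩
        rw [hTE, Finset.mem_singleton] at this
        exact hy.1 this
      · rintro ⟨⟨hxE, hc⟩, hsub⟩
        refine ⟨hc, ?_⟩
        ext y
        simp only [Finset.mem_sdiff, Finset.mem_singleton]
        constructor
        · rintro ⟨hyT, hyE⟩
          by_contra hne
          exact hyE (hsub (Finset.mem_erase.mpr ⟨hne, hyT⟩))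
        · rintro rfl
          exact ⟨hx, hxE⟩
    rw [heq, count_supersets _ _ (Finset.erase_subset_erase x (subset_univ T)) (by
      rw [Finset.card_erase_of_mem hx, hTcard]; omega)]
    rw [Finset.card_erase_of_mem hx, Finset.card_erase_of_mem (mem_univ x), hTcard,
      Finset.card_univ, Fintype.card_fin]
    congr 1 <;> omega
  rw [← Finset.card_eq_sum_ones, hbi, Finset.card_biUnion (by
    intro x hx y hy hxy
    rw [Function.onFun, Finset.disjoint_left]
    intro E hE hE'
    simp only [mem_filter] at hE hE'
    apply hxy
    have := hE.2.symm.trans hE'.2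
    exact Finset.singleton_injective this)]
  rw [Finset.sum_congr rfl hinner]
  simp only [Finset.sum_const, smul_eq_mul, hTcard]
  -- first sum
  rcases eq_or_lt_of_le ht with heq | htk
  · have hempty : ((Finset.univ : Finset (Fin n)).powersetCard (k - 1)).filter
        (fun E => T ⊆ E) = ∅ := by
      rw [Finset.filter_eq_empty_iff]
      intro E hE hTE
      rw [Finset.mem_powersetCard_univ] at hE
      have := Finset.card_le_card hTE
      omega
    rw [hempty]
    have h0 : k - t = 0 := by omega
    simp [h0, heq]
  · have hcount1 : (((Finset.univ : Finset (Fin n)).powersetCard (k - 1)).filter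
        (fun E => T ⊆ E)).card = (n - t).choose (k - 1 - t) := by
      rw [count_supersets _ _ (subset_univ T) (by omega : T.card ≤ k - 1), hTcard,
        Finset.card_univ, Fintype.card_fin]
    rw [hcount1]
    have hiden : (n - t).choose (k - t) * (k - t) = (n - t).choose (k - 1 - t) * (n - k + 1) := by
      have h1 : k - t = (k - 1 - t) + 1 := by omega
      have h2 : n - t - (k - 1 - t) = n - k + 1 := by omega
      rw [h1, Nat.choose_succ_right_eq, h2]
    set c := (n - t).choose (k - t)
    set d := (n - t).choose (k - 1 - t)
    calc d * (n - k + 1) ^ 2 + t * c = (n - k + 1) * (d * (n - k + 1)) + t * c := by ring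
      _ = (n - k + 1) * (c * (k - t)) + t * c := by rw [← hiden]
      _ = c * (t + (n - k + 1) * (k - t)) := by ring
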